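/- Let d ≥ 1, λ ∈ ℝ, and let B : ℝ^d → ℝ^{d×d} be continuous, bounded and antisymmetric (B_{lj} = −B_{jl}). Then for all f, g ∈ S(ℝ^{2d}) and every X = (x,ξ) ∈ ℝ^{2d}, the magnetic Moyal product converges pointwise to the ordinary product as ε → 0: lim_{ε→0} (f ⋆^B_{ε,λ} g)(X) = f(X) g(X). (This is the zeroth-order term (f ⋆ g)_{(0,0)} = f·g of the asymptotic expansion of the magnetic Weyl product.) -/

import Mathlib

noncomputable section
open MeasureTheory Complex Filter
open scoped FourierTransform RealInnerProductSpace

/-- `ℝ^d` -/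
abbrev Vd (d : ℕ) := Fin d → ℝ

/-- Euclidean dot product. -/
def dotR {d : ℕ} (x y : Vd d) : ℝ := ∑ l, x l * y l

/-- The symplectic form `σ((x,ξ),(y,η)) = ξ·y - x·η`. -/
def symp {d : ℕ} (X Y : Vd d × Vd d) : ℝ := dotR X.2 Y.1 - dotR X.1 Y.2

/-- The symplectic Fourier transform `(F_σ f)(Y) = (2π)^{-d} ∫ e^{iσ(Y,X)} f(X) dX`. -/
def symFT {d : ℕ} (f : Vd d × Vd d → ℂ) (Y : Vd d × Vd d) : ℂ :=
  (((2 * Real.pi) ^ d)⁻¹ : ℝ) *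
    ∫ X : Vd d × Vd d, Complex.exp (Complex.I * symp Y X) * f X

/-- `B̃^ε_{lj}(x,y,z) := (1/2)∫_{-1/2}^{1/2}dt ∫_0^1 ds s [B_{lj}(x+εs(ty-z/2)) + B_{lj}(x+εs(y/2+tz))]`. -/
def Btil {d : ℕ} (ε : ℝ) (B : Vd d → Fin d → Fin d → ℝ) (x y z : Vd d)
    (l j : Fin d) : ℝ :=
  (2:ℝ)⁻¹ * ∫ t in (-(2:ℝ)⁻¹)..(2:ℝ)⁻¹, ∫ s in (0:ℝ)..1,
    s * (B (x + (ε * s) • (t • y - (2:ℝ)⁻¹ • z)) l j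
          + B (x + (ε * s) • ((2:ℝ)⁻¹ • y + t • z)) l j)

/-- The scaled magnetic flux `γ^B_ε(x,y,z) := ε Σ_{l,j} B̃^ε_{lj}(x,y,z) y_l z_j`. -/
def gammaB {d : ℕ} (ε : ℝ) (B : Vd d → Fin d → Fin d → ℝ) (x y z : Vd d) : ℝ :=
  ε * ∑ l, ∑ j, Btil ε B x y z l j * y l * z j

/-- The magnetic Moyal product
`(f ⋆^B_{ε,λ} g)(X) = (2π)^{-2d} ∫∫ e^{iσ(X,Y+Z)} e^{i(ε/2)σ(Y,Z) - iλγ^B_ε(x,y,z)} (F_σf)(Y) (F_σg)(Z) dY dZ`. -/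
def moyalB {d : ℕ} (ε lam : ℝ) (B : Vd d → Fin d → Fin d → ℝ)
    (f g : Vd d × Vd d → ℂ) (X : Vd d × Vd d) : ℂ :=
  (((2 * Real.pi) ^ (2 * d))⁻¹ : ℝ) * ∫ Y : Vd d × Vd d, ∫ Z : Vd d × Vd d,
    Complex.exp (Complex.I * symp X (Y + Z)) *
      Complex.exp (Complex.I * (ε / 2) * symp Y Z
        - Complex.I * lam * gammaB ε B X.1 Y.1 Z.1) *
      symFT f Y * symFT g Z

abbrev Wd (d : ℕ) := EuclideanSpace ℝ (Fin d ⊕ Fin d)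

def psiL (d : ℕ) : (Vd d × Vd d) ≃ₗ[ℝ] Wd d where
  toFun p := WithLp.toLp 2 (fun i => Sum.elim p.1 p.2 i)
  invFun w := (fun l => w (.inl l), fun j => w (.inr j))
  map_add' p q := by ext i; cases i <;> rfl
  map_smul' c p := by ext i; cases i <;> rfl
  left_inv p := rfl
  right_inv w := by ext i; cases i <;> rfl

def psi (d : ℕ) : (Vd d × Vd d) ≃L[ℝ] Wd d := (psiL d).toContinuousLinearEquiv

lemma psi_mp (d : ℕ) : MeasurePreserving (psi d) volume volume := by
  have h1 := MeasureTheory.volume_measurePreserving_sumPiEquivProdPi_symm (fun _ : Fin d ⊕ Fin d => ℝ)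
  have h2 := (EuclideanSpace.volume_preserving_symm_measurableEquiv_toLp (Fin d ⊕ Fin d)).symm
  have h3 := h2.comp h1
  exact h3

def JL (d : ℕ) : (Vd d × Vd d) ≃ₗ[ℝ] (Vd d × Vd d) where
  toFun p := (p.2, -p.1)
  invFun p := (-p.2, p.1)
  map_add' p q := by ext <;> simp <;> ring
  map_smul' c p := by ext <;> simp
  left_inv p := by simp
  right_inv p := by simp

def Jc (d : ℕ) : (Vd d × Vd d) ≃L[ℝ] (Vd d × Vd d) := (JL d).toContinuousLinearEquiv

lemma Jc_mp (d : ℕ) : MeasurePreserving (Jc d) volume volume := by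
  have hswap : MeasurePreserving (Prod.swap : (Vd d × Vd d) → (Vd d × Vd d)) volume volume := by
    rw [MeasureTheory.Measure.volume_eq_prod]
    exact Measure.measurePreserving_swap
  have hneg : MeasurePreserving (fun p : (Vd d × Vd d) => (p.1, -p.2)) volume volume := by
    rw [MeasureTheory.Measure.volume_eq_prod]
    exact (MeasurePreserving.id _).prod (Measure.measurePreserving_neg _)
  have : (⇑(Jc d)) = (fun p : (Vd d × Vd d) => (p.1, -p.2)) ∘ Prod.swap := rfl
  rw [this]
  exact hneg.comp hswap

def Phi (d : ℕ) (Y : Vd d × Vd d) : Wd d := psi d (Jc d Y)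

lemma Phi_mp (d : ℕ) : MeasurePreserving (Phi d) volume volume :=
  (psi_mp d).comp (Jc_mp d)

lemma Phi_me (d : ℕ) : MeasurableEmbedding (Phi d) :=
  ((psi d).toHomeomorph.measurableEmbedding).comp ((Jc d).toHomeomorph.measurableEmbedding)


lemma inner_Phi (d : ℕ) (Y X : Vd d × Vd d) : ⟪Phi d Y, psi d X⟫ = symp Y X := by
  have h1 : ∀ (p : Vd d × Vd d) (i), psi d p i = Sum.elim p.1 p.2 i := fun _ _ => rfl
  have h2 : ∀ p : Vd d × Vd d, Jc d p = (p.2, -p.1) := fun _ => rfl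
  simp only [PiLp.inner_apply, RCLike.inner_apply, Fintype.sum_sum_type, symp, dotR, Phi,
    h1, h2, conj_trivial, Sum.elim_inl, Sum.elim_inr, Pi.neg_apply, neg_mul]
  simp only [mul_neg, Finset.sum_neg_distrib, ← sub_eq_add_neg]
  congr 1 <;> exact Finset.sum_congr rfl (fun i _ => by ring)

lemma twopi_ne : (2 * Real.pi) ≠ 0 := by positivity
lemma c0_ne (d : ℕ) : (-(2 * Real.pi)⁻¹ : ℝ) ≠ 0 := by
  simp [Real.pi_ne_zero]

/-- The linear change of variables `Y ↦ -(2π)⁻¹ • ψ(JY)`. -/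
def Lc (d : ℕ) : (Vd d × Vd d) ≃L[ℝ] Wd d :=
  (((JL d).trans (psiL d)).trans
    (LinearEquiv.smulOfNeZero ℝ (Wd d) _ (c0_ne d))).toContinuousLinearEquiv

lemma Lc_apply (d : ℕ) (Y : Vd d × Vd d) : Lc d Y = (-(2 * Real.pi)⁻¹ : ℝ) • Phi d Y := rfl

/-- `(2π)^d • (𝓕 (f ∘ ψ⁻¹)) ∘ Lc` as a Schwartz map; this equals `symFT f`. -/
def Fhat (d : ℕ) (f : SchwartzMap (Vd d × Vd d) ℂ) : SchwartzMap (Vd d × Vd d) ℂ :=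
  (((2 * Real.pi) ^ d)⁻¹ : ℝ) •
    (SchwartzMap.compCLMOfContinuousLinearEquiv ℝ (Lc d)
      (SchwartzMap.fourierTransformCLM ℝ
        (SchwartzMap.compCLMOfContinuousLinearEquiv ℝ (psi d).symm f)))

example (d : ℕ) (f : SchwartzMap (Vd d × Vd d) ℂ) (Y : Vd d × Vd d) :
    Fhat d f Y = (((2 * Real.pi) ^ d)⁻¹ : ℝ) •
      (𝓕 (⇑f ∘ ⇑(psi d).symm) ((-(2 * Real.pi)⁻¹ : ℝ) • Phi d Y)) := by
  simp [Fhat, Lc_apply, SchwartzMap.fourier_coe]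


lemma symFT_eq (d : ℕ) (f : SchwartzMap (Vd d × Vd d) ℂ) (Y : Vd d × Vd d) :
    symFT (⇑f) Y = Fhat d f Y := by
  have key : (∫ X : Vd d × Vd d, Complex.exp (Complex.I * symp Y X) * f X)
      = 𝓕 (⇑f ∘ ⇑(psi d).symm) ((-(2 * Real.pi)⁻¹ : ℝ) • Phi d Y) := by
    rw [Real.fourier_eq']
    rw [← (psi_mp d).integral_comp (psi d).toHomeomorph.measurableEmbedding]
    congr 1; funext X
    have h1 : (psi d).symm (psi d X) = X := ContinuousLinearEquiv.symm_apply_apply _ _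
    have h2 : ⟪(psi d X : Wd d), (-(2 * Real.pi)⁻¹ : ℝ) • Phi d Y⟫
        = -(2 * Real.pi)⁻¹ * symp Y X := by
      rw [real_inner_smul_right, real_inner_comm, inner_Phi]
    have h3 : -2 * Real.pi * (-(2 * Real.pi)⁻¹ * symp Y X) = symp Y X := by
      field_simp
    simp only [Function.comp_apply, h1, h2, smul_eq_mul, h3, mul_comm Complex.I]
  rw [symFT, key, Fhat]
  simp only [SchwartzMap.smul_apply, SchwartzMap.compCLMOfContinuousLinearEquiv_apply,
    Function.comp_apply, SchwartzMap.fourierTransformCLM_apply, SchwartzMap.fourier_coe, Lc_apply,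
    SchwartzMap.compCLMOfContinuousLinearEquiv_apply, smul_eq_mul]
  norm_cast

lemma symp_antisymm {d : ℕ} (X Y : Vd d × Vd d) : symp X Y = -symp Y X := by
  simp only [symp, dotR]
  rw [neg_sub]
  congr 1 <;> exact Finset.sum_congr rfl (fun i _ => by ring)

lemma symFT_inversion (d : ℕ) (f : SchwartzMap (Vd d × Vd d) ℂ) (X : Vd d × Vd d) :
    (((2 * Real.pi) ^ d)⁻¹ : ℝ) *
      (∫ Y : Vd d × Vd d, Complex.exp (Complex.I * symp X Y) * Fhat d f Y) = f X := by
  set h : SchwartzMap (Wd d) ℂ := SchwartzMap.compCLMOfContinuousLinearEquiv ℝ (psi d).symm f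
  set a : Wd d := psi d X
  set c : ℝ := -(2 * Real.pi)⁻¹
  -- the inversion integrand
  set H₂ : Wd d → ℂ := fun u => Complex.exp ((2 * Real.pi * ⟪u, a⟫ : ℝ) * Complex.I) * 𝓕 (⇑h) u
    with hH₂
  have step1 : (∫ Y : Vd d × Vd d, Complex.exp (Complex.I * symp X Y) * Fhat d f Y)
      = ∫ w : Wd d, (((2 * Real.pi) ^ d)⁻¹ : ℝ) • H₂ (c • w) := by
    rw [← (Phi_mp d).integral_comp (Phi_me d)]
    congr 1; funext Y
    have h2 : ⟪c • Phi d Y, a⟫ = c * symp Y X := by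
      rw [real_inner_smul_left, inner_Phi]
    have h3 : 2 * Real.pi * (c * symp Y X) = -symp Y X := by
      simp only [c]
      rw [show (2 * Real.pi) * (-(2 * Real.pi)⁻¹ * symp Y X)
          = -((2 * Real.pi) * (2 * Real.pi)⁻¹) * symp Y X by ring,
        mul_inv_cancel₀ twopi_ne]
      ring
    have h4 : Fhat d f Y = (((2 * Real.pi) ^ d)⁻¹ : ℝ) • 𝓕 (⇑h) (c • Phi d Y) := by
      simp [Fhat, Lc_apply, h, c, SchwartzMap.fourier_coe]
    rw [hH₂]
    simp only [h2, h3, h4, smul_eq_mul, Complex.real_smul]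
    rw [symp_antisymm X Y]
    push_cast
    ring_nf
  have step2 : (∫ w : Wd d, (((2 * Real.pi) ^ d)⁻¹ : ℝ) • H₂ (c • w))
      = (((2 * Real.pi) ^ d)⁻¹ : ℝ) • ((2 * Real.pi) ^ (d + d) : ℝ) • ∫ u, H₂ u := by
    rw [integral_smul, MeasureTheory.Measure.integral_comp_smul volume H₂ c]
    have hrk : Module.finrank ℝ (Wd d) = d + d := by
      rw [finrank_euclideanSpace]; simp
    have habs : |c| = (2 * Real.pi)⁻¹ := by
      simp only [c, abs_neg, abs_inv]
      rw [abs_of_pos (by positivity : (0:ℝ) < 2 * Real.pi)]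
    have hc : |(c ^ (d + d))⁻¹| = (2 * Real.pi) ^ (d + d) := by
      rw [abs_inv, _root_.abs_pow, habs, ← inv_pow, inv_inv]
    rw [hrk, hc]
  have step3 : (∫ u, H₂ u) = f X := by
    have hcont : Continuous (⇑h) := h.continuous
    have hint : Integrable (⇑h) := h.integrable
    have hfint : Integrable (𝓕 (⇑h)) := by
      rw [← SchwartzMap.fourier_coe]
      exact (𝓕 h).integrable
    have inv := hcont.fourierInv_fourier_eq hint hfint
    have : (∫ u, H₂ u) = 𝓕⁻ (𝓕 (⇑h)) a := by
      rw [Real.fourierInv_eq']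
      simp only [smul_eq_mul]
      rfl
    rw [this, inv]
    show f ((psi d).symm (psi d X)) = f X
    rw [ContinuousLinearEquiv.symm_apply_apply]
  rw [step1, step2, step3]
  rw [smul_smul, Complex.real_smul]
  have hh : (((2 * Real.pi) ^ d)⁻¹ * (2 * Real.pi) ^ (d + d) : ℝ) = (2 * Real.pi) ^ d := by
    rw [pow_add]
    field_simp
  rw [hh, ← mul_assoc, ← Complex.ofReal_mul,
    inv_mul_cancel₀ (by positivity : (0:ℝ) < (2 * Real.pi) ^ d).ne',
    Complex.ofReal_one, one_mul]


section cont
variable {d : ℕ} {ε : ℝ} {B : Vd d → Fin d → Fin d → ℝ} {x : Vd d} {l j : Fin d}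

lemma continuous_dotR₂ {E : Type*} [TopologicalSpace E] {a b : E → Vd d}
    (ha : Continuous a) (hb : Continuous b) : Continuous fun e => dotR (a e) (b e) := by
  unfold dotR
  apply continuous_finset_sum
  intro i _
  exact ((continuous_apply i).comp ha).mul ((continuous_apply i).comp hb)

lemma continuous_Btil (hB : ∀ l j, Continuous fun x => B x l j) :
    Continuous fun p : Vd d × Vd d => Btil ε B x p.1 p.2 l j := by
  unfold Btil
  apply Continuous.mul continuous_const
  apply intervalIntegral.continuous_parametric_intervalIntegral_of_continuous'
  show Continuous fun q : (Vd d × Vd d) × ℝ => ∫ s in (0:ℝ)..1,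
    s * (B (x + (ε * s) • (q.2 • q.1.1 - (2:ℝ)⁻¹ • q.1.2)) l j
          + B (x + (ε * s) • ((2:ℝ)⁻¹ • q.1.1 + q.2 • q.1.2)) l j)
  apply intervalIntegral.continuous_parametric_intervalIntegral_of_continuous'
  apply Continuous.mul (by fun_prop)
  apply Continuous.add
  · exact (hB l j).comp (by fun_prop)
  · exact (hB l j).comp (by fun_prop)

lemma Btil_bound {M : ℝ} (hM : ∀ x l j, |B x l j| ≤ M) (hM0 : 0 ≤ M)
    (y z : Vd d) : |Btil ε B x y z l j| ≤ M := by
  unfold Btil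
  rw [abs_mul]
  have hinner : ∀ t : ℝ, ‖∫ s in (0:ℝ)..1,
      s * (B (x + (ε * s) • (t • y - (2:ℝ)⁻¹ • z)) l j
          + B (x + (ε * s) • ((2:ℝ)⁻¹ • y + t • z)) l j)‖ ≤ 2 * M := by
    intro t
    have := intervalIntegral.norm_integral_le_of_norm_le_const
      (C := 2 * M) (a := (0:ℝ)) (b := 1)
      (f := fun s => s * (B (x + (ε * s) • (t • y - (2:ℝ)⁻¹ • z)) l j
          + B (x + (ε * s) • ((2:ℝ)⁻¹ • y + t • z)) l j)) ?_
    · simpa using this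
    · intro s hs
      rw [Set.uIoc_of_le (by norm_num : (0:ℝ) ≤ 1)] at hs
      rw [Real.norm_eq_abs, abs_mul]
      have hs1 : |s| ≤ 1 := by
        rw [abs_of_pos hs.1]; exact hs.2
      calc |s| * |B _ l j + B _ l j| ≤ 1 * (M + M) := by
            apply mul_le_mul hs1 ((abs_add_le _ _).trans (add_le_add (hM _ _ _) (hM _ _ _)))
              (abs_nonneg _) zero_le_one
        _ = 2 * M := by ring
  have houter : ‖∫ t in (-(2:ℝ)⁻¹)..(2:ℝ)⁻¹, ∫ s in (0:ℝ)..1,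
      s * (B (x + (ε * s) • (t • y - (2:ℝ)⁻¹ • z)) l j
          + B (x + (ε * s) • ((2:ℝ)⁻¹ • y + t • z)) l j)‖ ≤ 2 * M := by
    have := intervalIntegral.norm_integral_le_of_norm_le_const
      (C := 2 * M) (a := -(2:ℝ)⁻¹) (b := (2:ℝ)⁻¹)
      (f := fun t => ∫ s in (0:ℝ)..1,
        s * (B (x + (ε * s) • (t • y - (2:ℝ)⁻¹ • z)) l j
          + B (x + (ε * s) • ((2:ℝ)⁻¹ • y + t • z)) l j))
      (fun t _ => hinner t)
    have h1 : |(2:ℝ)⁻¹ - -(2:ℝ)⁻¹| = 1 := by norm_num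
    rw [h1, mul_one] at this
    exact this
  calc |(2:ℝ)⁻¹| * ‖_‖ ≤ (2:ℝ)⁻¹ * (2 * M) := by
        rw [abs_of_pos (by norm_num : (0:ℝ) < 2⁻¹)]
        exact mul_le_mul_of_nonneg_left houter (by norm_num)
    _ = M := by ring

lemma gammaB_tendsto {M : ℝ} (hM : ∀ x l j, |B x l j| ≤ M) (hM0 : 0 ≤ M) (y z : Vd d) :
    Filter.Tendsto (fun ε : ℝ => gammaB ε B x y z) (nhds 0) (nhds 0) := by
  apply squeeze_zero_norm (a := fun ε : ℝ => |ε| * ∑ l, ∑ j, M * |y l| * |z j|)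
  · intro ε
    rw [Real.norm_eq_abs]
    unfold gammaB
    rw [abs_mul]
    apply mul_le_mul_of_nonneg_left _ (abs_nonneg ε)
    refine (Finset.abs_sum_le_sum_abs _ _).trans (Finset.sum_le_sum fun l _ => ?_)
    refine (Finset.abs_sum_le_sum_abs _ _).trans (Finset.sum_le_sum fun j _ => ?_)
    rw [abs_mul, abs_mul]
    have := Btil_bound (ε := ε) (x := x) (l := l) (j := j) hM hM0 y z
    apply mul_le_mul_of_nonneg_right _ (abs_nonneg _)
    exact mul_le_mul_of_nonneg_right this (abs_nonneg _)
  · have : Filter.Tendsto (fun ε : ℝ => |ε|) (nhds 0) (nhds 0) := by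
      simpa using (_root_.continuous_abs.tendsto (0:ℝ))
    simpa using this.mul_const _

end cont

instance instHaarProd (d : ℕ) : Measure.IsAddHaarMeasure (volume : Measure (Vd d × Vd d)) := by
  rw [MeasureTheory.Measure.volume_eq_prod]; exact Measure.prod.instIsAddHaarMeasure _ _

/-- The magnetic Moyal product converges pointwise to the ordinary product as `ε → 0`:
the zeroth-order term of the asymptotic expansion is `(f ⋆ g)_{(0,0)} = f·g`. -/
theorem statement8 (d : ℕ) (hd : 1 ≤ d) (lam : ℝ)
    (B : Vd d → Fin d → Fin d → ℝ)
    (hBcont : ∀ l j, Continuous fun x => B x l j)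
    (hBbdd : ∃ M, ∀ (x : Vd d) (l j : Fin d), |B x l j| ≤ M)
    (hBanti : ∀ (x : Vd d) (l j : Fin d), B x l j = -B x j l)
    (f g : SchwartzMap (Vd d × Vd d) ℂ) (X : Vd d × Vd d) :
    Tendsto (fun ε : ℝ => moyalB ε lam B (⇑f) (⇑g) X) (nhds 0)
      (nhds (f X * g X)) := by
  obtain ⟨M₀, hM₀⟩ := hBbdd
  set M : ℝ := max M₀ 0 with hMdef
  have hMB : ∀ (x : Vd d) (l j : Fin d), |B x l j| ≤ M :=
    fun x l j => (hM₀ x l j).trans (le_max_left _ _)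
  have hM0 : (0:ℝ) ≤ M := le_max_right _ _
  set K : ℝ → (Vd d × Vd d) × (Vd d × Vd d) → ℂ := fun ε P =>
    Complex.exp (Complex.I * symp X (P.1 + P.2)) *
      Complex.exp (Complex.I * (ε / 2) * symp P.1 P.2
        - Complex.I * lam * gammaB ε B X.1 P.1.1 P.2.1) *
      Fhat d f P.1 * Fhat d g P.2 with hK
  -- norm of the integrand
  have hnormK : ∀ (ε : ℝ) P, ‖K ε P‖ = ‖Fhat d f P.1‖ * ‖Fhat d g P.2‖ := by
    intro ε P
    simp only [hK]
    rw [norm_mul, norm_mul, norm_mul,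
      show Complex.I * ((symp X (P.1 + P.2) : ℝ) : ℂ)
        = ((symp X (P.1 + P.2) : ℝ) : ℂ) * Complex.I from mul_comm _ _,
      show Complex.I * ((ε : ℂ) / 2) * ((symp P.1 P.2 : ℝ) : ℂ)
          - Complex.I * ((lam : ℝ) : ℂ) * ((gammaB ε B X.1 P.1.1 P.2.1 : ℝ) : ℂ)
        = ((ε / 2 * symp P.1 P.2 - lam * gammaB ε B X.1 P.1.1 P.2.1 : ℝ) : ℂ) * Complex.I by
        push_cast; ring,
      Complex.norm_exp_ofReal_mul_I, Complex.norm_exp_ofReal_mul_I]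
    ring
  -- continuity of the integrand
  have hsympC : Continuous fun P : (Vd d × Vd d) × (Vd d × Vd d) => symp X (P.1 + P.2) := by
    unfold symp
    exact (continuous_dotR₂ continuous_const (by fun_prop)).sub
      (continuous_dotR₂ continuous_const (by fun_prop))
  have hsympC2 : Continuous fun P : (Vd d × Vd d) × (Vd d × Vd d) => symp P.1 P.2 := by
    unfold symp
    exact (continuous_dotR₂ (by fun_prop) (by fun_prop)).sub
      (continuous_dotR₂ (by fun_prop) (by fun_prop))
  have hgammaC : ∀ ε : ℝ, Continuous fun P : (Vd d × Vd d) × (Vd d × Vd d) =>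
      gammaB ε B X.1 P.1.1 P.2.1 := by
    intro ε
    unfold gammaB
    apply Continuous.mul continuous_const
    apply continuous_finset_sum; intro l _
    apply continuous_finset_sum; intro j _
    have hb : Continuous fun p : Vd d × Vd d => Btil ε B X.1 p.1 p.2 l j :=
      continuous_Btil hBcont
    exact ((hb.comp (by fun_prop :
        Continuous fun P : (Vd d × Vd d) × (Vd d × Vd d) => (P.1.1, P.2.1))).mul
      ((continuous_apply l).comp (by fun_prop))).mul
      ((continuous_apply j).comp (by fun_prop))
  have hcontK : ∀ ε : ℝ, Continuous (K ε) := by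
    intro ε
    simp only [hK]
    refine (((Continuous.cexp ?_).mul (Continuous.cexp ?_)).mul
      ((Fhat d f).continuous.comp continuous_fst)).mul
      ((Fhat d g).continuous.comp continuous_snd)
    · exact continuous_const.mul (Complex.continuous_ofReal.comp hsympC)
    · exact (continuous_const.mul (Complex.continuous_ofReal.comp hsympC2)).sub
        (continuous_const.mul (Complex.continuous_ofReal.comp (hgammaC ε)))
  -- integrability
  have hIntBound : Integrable
      (fun P : (Vd d × Vd d) × (Vd d × Vd d) => ‖Fhat d f P.1‖ * ‖Fhat d g P.2‖) := by
    rw [MeasureTheory.Measure.volume_eq_prod]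
    exact ((Fhat d f).integrable.norm).mul_prod ((Fhat d g).integrable.norm)
  have hIntK : ∀ ε : ℝ, Integrable (K ε) := fun ε =>
    hIntBound.mono' ((hcontK ε).aestronglyMeasurable)
      (Filter.Eventually.of_forall fun P => le_of_eq (hnormK ε P))
  -- moyalB as an integral over the product space
  have hmoyal : ∀ ε : ℝ, moyalB ε lam B (⇑f) (⇑g) X
      = (((2 * Real.pi) ^ (2 * d))⁻¹ : ℝ) * ∫ P, K ε P := by
    intro ε
    have hint : Integrable (Function.uncurry fun Y Z => K ε (Y, Z))
        ((volume : Measure (Vd d × Vd d)).prod volume) := by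
      have h := hIntK ε
      rw [MeasureTheory.Measure.volume_eq_prod] at h
      exact h
    have h2 := MeasureTheory.integral_integral hint
    rw [moyalB]
    simp only [symFT_eq d f, symFT_eq d g]
    simp only [hK] at h2
    rw [← MeasureTheory.Measure.volume_eq_prod] at h2
    rw [h2]
  -- dominated convergence
  have hDCT : Tendsto (fun ε : ℝ => ∫ P, K ε P) (nhds 0) (nhds (∫ P, K 0 P)) := by
    apply tendsto_integral_filter_of_dominated_convergence
      (fun P => ‖Fhat d f P.1‖ * ‖Fhat d g P.2‖)
    · exact Filter.Eventually.of_forall fun ε => (hcontK ε).aestronglyMeasurable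
    · exact Filter.Eventually.of_forall fun ε =>
        Filter.Eventually.of_forall fun P => le_of_eq (hnormK ε P)
    · exact hIntBound
    · apply Filter.Eventually.of_forall
      intro P
      have hgt := gammaB_tendsto (B := B) (x := X.1) hMB hM0 P.1.1 P.2.1
      have t1 : Tendsto (fun ε : ℝ => (ε : ℂ)) (nhds 0) (nhds (((0:ℝ) : ℂ))) :=
        Complex.continuous_ofReal.tendsto 0
      have t2 : Tendsto (fun ε : ℝ => ((gammaB ε B X.1 P.1.1 P.2.1 : ℝ) : ℂ)) (nhds 0)
          (nhds (((0:ℝ) : ℂ))) := (Complex.continuous_ofReal.tendsto 0).comp hgt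
      have h1 : Tendsto (fun ε : ℝ => Complex.I * ((ε : ℂ) / 2) * ((symp P.1 P.2 : ℝ) : ℂ)
          - Complex.I * ((lam : ℝ) : ℂ) * ((gammaB ε B X.1 P.1.1 P.2.1 : ℝ) : ℂ)) (nhds 0)
          (nhds (Complex.I * (((0:ℝ) : ℂ) / 2) * ((symp P.1 P.2 : ℝ) : ℂ)
            - Complex.I * ((lam : ℝ) : ℂ) * ((0:ℝ) : ℂ))) :=
        (((t1.div_const 2).const_mul Complex.I).mul_const _).sub (t2.const_mul _)
      have h3 := ((h1.cexp.const_mul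
        (Complex.exp (Complex.I * symp X (P.1 + P.2)))).mul_const
        (Fhat d f P.1)).mul_const (Fhat d g P.2)
      have hg0 : gammaB 0 B X.1 P.1.1 P.2.1 = 0 := by simp [gammaB]
      simp only [hK]
      rw [hg0]
      exact h3
  -- the value at ε = 0
  have h0 : (((2 * Real.pi) ^ (2 * d))⁻¹ : ℝ) * ∫ P, K 0 P = f X * g X := by
    rw [← hmoyal 0, moyalB]
    simp only [symFT_eq d f, symFT_eq d g]
    have hintg : ∀ Y Z : Vd d × Vd d,
        Complex.exp (Complex.I * symp X (Y + Z)) *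
          Complex.exp (Complex.I * (((0:ℝ) : ℂ) / 2) * ((symp Y Z : ℝ) : ℂ)
            - Complex.I * ((lam : ℝ) : ℂ) * ((gammaB 0 B X.1 Y.1 Z.1 : ℝ) : ℂ)) *
          Fhat d f Y * Fhat d g Z
        = (Complex.exp (Complex.I * symp X Y) * Fhat d f Y) *
          (Complex.exp (Complex.I * symp X Z) * Fhat d g Z) := by
      intro Y Z
      have hg0 : gammaB 0 B X.1 Y.1 Z.1 = 0 := by simp [gammaB]
      have hadd : symp X (Y + Z) = symp X Y + symp X Z := by
        simp only [symp, dotR, Prod.fst_add, Prod.snd_add, Pi.add_apply, mul_add,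
          Finset.sum_add_distrib]
        ring
      rw [hg0, hadd]
      push_cast
      rw [mul_add, Complex.exp_add]
      norm_num
      ring
    simp only [hintg]
    simp only [MeasureTheory.integral_const_mul]
    rw [MeasureTheory.integral_mul_const]
    have e1 := symFT_inversion d f X
    have e2 := symFT_inversion d g X
    rw [← e1, ← e2]
    rw [show (2 * d) = d + d from two_mul d, pow_add]
    push_cast
    ring
  -- conclusion
  have hfinal := hDCT.const_mul (((((2 * Real.pi) ^ (2 * d))⁻¹ : ℝ)) : ℂ)
  rw [h0] at hfinal
  have : (fun ε : ℝ => moyalB ε lam B (⇑f) (⇑g) X)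
      = fun ε : ℝ => (((2 * Real.pi) ^ (2 * d))⁻¹ : ℝ) * ∫ P, K ε P := funext hmoyal
  rw [this]
  exact hfinal
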